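/- Let σ = (σ_0,…,σ_n) be a changemaker vector and let x be a positive integer. Then T^σ_m = xp − |σ|₁, where m = (x²p − x|σ|₁)/2 (an integer since p ≡ |σ|₁ mod 2). Equivalently, xp − |σ|₁ is the greatest element of the set {σ·α : α ∈ ℤ_{≥0}^{n+1}, Σ_j α_j(α_j+1) ≤ x²p − x|σ|₁}. -/
import Mathlib


open Finset

/-- `σ` is a changemaker vector: all entries are positive and every integer `k` with
`0 ≤ k ≤ σ_0 + ⋯ + σ_n` is the sum of a subset of the entries. -/
def IsChangemaker {n : ℕ} (σ : Fin (n + 1) → ℕ) : Prop :=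
  (∀ i, 0 < σ i) ∧
    ∀ k : ℕ, k ≤ ∑ i, σ i → ∃ A : Finset (Fin (n + 1)), ∑ i ∈ A, σ i = k

/-- `Tcm σ m = T^σ_m`, the maximum of `σ·α` over all `α ∈ ℤ_{≥0}^{n+1}` with
`Σ_j α_j (α_j + 1) ≤ 2m` (the maximum exists: the set is nonempty and bounded). -/
noncomputable def Tcm {n : ℕ} (σ : Fin (n + 1) → ℕ) (m : ℕ) : ℕ :=
  sSup {t : ℕ | ∃ α : Fin (n + 1) → ℕ,
    (∑ j, α j * (α j + 1)) ≤ 2 * m ∧ t = ∑ j, σ j * α j}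

/-- `Vcm σ i = V^σ_i`, the `i`-th relevant coefficient of `σ`:
the least `m` with `T^σ_m ≥ i` (and `V^σ_0 = 0`). -/
noncomputable def Vcm {n : ℕ} (σ : Fin (n + 1) → ℕ) (i : ℕ) : ℕ :=
  sInf {m : ℕ | i ≤ Tcm σ m}

theorem stmt_2 {n : ℕ} (σ : Fin (n + 1) → ℕ) (hσ : IsChangemaker σ)
    (x : ℕ) (hx : 0 < x) (m : ℕ)
    (hm : 2 * m + x * (∑ i, σ i) = x ^ 2 * (∑ i, (σ i) ^ 2)) :
    Tcm σ m + (∑ i, σ i) = x * (∑ i, (σ i) ^ 2) := by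
  obtain ⟨hpos, -⟩ := hσ
  set β : Fin (n + 1) → ℕ := fun j => x * σ j - 1 with hβdef
  have hβ : ∀ j, (β j : ℤ) = (x : ℤ) * σ j - 1 := by
    intro j
    have h1 : 1 ≤ x * σ j := Nat.one_le_iff_ne_zero.mpr
      (Nat.mul_ne_zero hx.ne' (hpos j).ne')
    simp [hβdef]
    push_cast [Nat.cast_sub h1]
    ring
  -- ∑ β j * (β j + 1) = 2 * m
  have hsum1 : (∑ j, β j * (β j + 1)) = 2 * m := by
    have : ((∑ j, β j * (β j + 1) : ℕ) : ℤ) = ((2 * m : ℕ) : ℤ) := by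
      push_cast
      have hmZ : (2 * m : ℤ) + x * (∑ i, (σ i : ℤ)) = x ^ 2 * (∑ i, (σ i : ℤ) ^ 2) := by
        exact_mod_cast congrArg (Nat.cast : ℕ → ℤ) hm
      calc (∑ j, (β j : ℤ) * (β j + 1))
          = ∑ j, ((x : ℤ) ^ 2 * (σ j) ^ 2 - x * σ j) := by
            refine Finset.sum_congr rfl fun j _ => ?_
            rw [hβ j]; ring
        _ = x ^ 2 * (∑ i, (σ i : ℤ) ^ 2) - x * (∑ i, (σ i : ℤ)) := by
            rw [Finset.sum_sub_distrib, ← Finset.mul_sum, ← Finset.mul_sum]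
        _ = 2 * m := by linarith
    exact_mod_cast this
  -- the candidate maximum
  set M : ℕ := ∑ j, σ j * β j with hMdef
  have hMval : (M : ℤ) + (∑ i, (σ i : ℤ)) = x * (∑ i, (σ i : ℤ) ^ 2) := by
    have : (M : ℤ) = ∑ j, (σ j : ℤ) * β j := by push_cast [hMdef]; ring_nf
    rw [this]
    calc (∑ j, (σ j : ℤ) * β j) + (∑ i, (σ i : ℤ))
        = ∑ j, ((σ j : ℤ) * β j + σ j) := by rw [← Finset.sum_add_distrib]
      _ = ∑ j, (x : ℤ) * (σ j) ^ 2 := by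
          refine Finset.sum_congr rfl fun j _ => ?_
          rw [hβ j]; ring
      _ = x * (∑ i, (σ i : ℤ) ^ 2) := by rw [← Finset.mul_sum]
  set S : Set ℕ := {t : ℕ | ∃ α : Fin (n + 1) → ℕ,
    (∑ j, α j * (α j + 1)) ≤ 2 * m ∧ t = ∑ j, σ j * α j} with hSdef
  have hmem : M ∈ S := ⟨β, le_of_eq hsum1, rfl⟩
  have hub : ∀ t ∈ S, t ≤ M := by
    rintro t ⟨α, hα, rfl⟩
    -- work in ℤ
    have key : ∀ j : Fin (n + 1),
        2 * (x : ℤ) * σ j * α j + β j * (β j + 1) ≤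
          (α j : ℤ) * (α j + 1) + 2 * x * σ j * β j := by
      intro j
      have h2 : (2 : ℤ) * x * σ j = 2 * (β j + 1) := by rw [hβ j]; ring
      have h3 : (0 : ℤ) ≤ ((α j : ℤ) - β j) * ((α j : ℤ) - β j - 1) := by
        rcases le_or_gt ((α j : ℤ) - β j) 0 with h | h
        · nlinarith [mul_self_nonneg ((α j : ℤ) - β j)]
        · exact mul_nonneg (by linarith) (by omega)
      nlinarith [h3, h2]
    have hsumkey : 2 * (x : ℤ) * (∑ j, (σ j : ℤ) * α j) + (2 * (m : ℤ)) ≤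
        (∑ j, (α j : ℤ) * (α j + 1)) + 2 * x * (M : ℤ) := by
      have hM' : (M : ℤ) = ∑ j, (σ j : ℤ) * β j := by push_cast [hMdef]; ring_nf
      have h2m : 2 * (m : ℤ) = ∑ j, (β j : ℤ) * (β j + 1) := by
        have := congrArg (Nat.cast : ℕ → ℤ) hsum1
        push_cast at this
        linarith
      have e1 : 2 * (x : ℤ) * (∑ j, (σ j : ℤ) * α j) = ∑ j, 2 * (x : ℤ) * σ j * α j := by
        rw [Finset.mul_sum]; exact Finset.sum_congr rfl fun j _ => by ring
      have e2 : 2 * (x : ℤ) * (∑ j, (σ j : ℤ) * β j) = ∑ j, 2 * (x : ℤ) * σ j * β j := by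
        rw [Finset.mul_sum]; exact Finset.sum_congr rfl fun j _ => by ring
      have hs := Finset.sum_le_sum (fun j (_ : j ∈ Finset.univ) => key j)
      rw [Finset.sum_add_distrib, Finset.sum_add_distrib] at hs
      rw [hM', e1, e2, h2m]
      exact hs
    have hαZ : (∑ j, (α j : ℤ) * (α j + 1)) ≤ (2 * m : ℤ) := by
      exact_mod_cast (by push_cast; exact_mod_cast hα :
        ((∑ j, α j * (α j + 1) : ℕ) : ℤ) ≤ ((2 * m : ℕ) : ℤ))
    have hxZ : (0 : ℤ) < x := by exact_mod_cast hx
    have : (∑ j, (σ j : ℤ) * α j) ≤ (M : ℤ) := by nlinarith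
    have h4 : ((∑ j, σ j * α j : ℕ) : ℤ) ≤ (M : ℤ) := by push_cast; ring_nf; ring_nf at this; exact this
    exact_mod_cast h4
  have hSup : Tcm σ m = M := by
    unfold Tcm
    exact le_antisymm (csSup_le ⟨M, hmem⟩ hub) (le_csSup ⟨M, hub⟩ hmem)
  rw [hSup]
  have : ((M + ∑ i, σ i : ℕ) : ℤ) = ((x * ∑ i, (σ i) ^ 2 : ℕ) : ℤ) := by
    push_cast; linarith [hMval]
  exact_mod_cast this
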